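/- Let p ∈ (0,1) and define g(q) = D(q‖p)/(1−q) for q ∈ (0,p). Then g is strictly decreasing on (0,p); equivalently, the function λ ↦ (1+λ)·D(λ/(1+λ) ‖ p) is strictly decreasing in λ on the interval (0, p/(1−p)). -/

import Mathlib

/-- The binary Kullback–Leibler divergence `D(q‖p)` (natural logarithms). -/
noncomputable def klBin (q p : ℝ) : ℝ :=
  q * Real.log (q / p) + (1 - q) * Real.log ((1 - q) / (1 - p))

lemma klBin_aux (p : ℝ) (hp0 : 0 < p) (hp1 : p < 1) {q : ℝ} (hq : q ∈ Set.Ioo (0:ℝ) p) :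
    klBin q p / (1 - q) =
      q / (1 - q) * (Real.log q - Real.log p) + (Real.log (1 - q) - Real.log (1 - p)) := by
  obtain ⟨hq0, hqp⟩ := hq
  have h1q : 0 < 1 - q := by linarith
  rw [klBin, Real.log_div hq0.ne' hp0.ne', Real.log_div h1q.ne' (by linarith : (1:ℝ)-p ≠ 0)]
  field_simp

lemma stmt6_deriv (p : ℝ) (hp0 : 0 < p) (hp1 : p < 1) {q : ℝ} (hq : q ∈ Set.Ioo (0:ℝ) p) :
    HasDerivAt (fun x : ℝ => klBin x p / (1 - x))
      ((Real.log q - Real.log p) / (1 - q)^2) q := by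
  obtain ⟨hq0, hqp⟩ := hq
  have h1q : 0 < 1 - q := by linarith
  have hd : HasDerivAt (fun x : ℝ => 1 - x) (-1) q := by
    simpa using (hasDerivAt_id' q).const_sub (1:ℝ)
  have h1 : HasDerivAt (fun x : ℝ => x / (1 - x))
      ((1 * (1 - q) - q * (-1)) / (1 - q)^2) q :=
    (hasDerivAt_id q).div hd h1q.ne'
  have h2 : HasDerivAt (fun x : ℝ => Real.log x - Real.log p) (1/q) q := by
    simpa using (Real.hasDerivAt_log hq0.ne').sub_const (Real.log p)
  have h3 := h1.mul h2
  have h4 : HasDerivAt (fun x : ℝ => Real.log (1 - x)) (1/(1-q) * (-1)) q := by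
    simpa [Function.comp_def] using (Real.hasDerivAt_log h1q.ne').comp q hd
  have h5 := h3.add ((h4.sub_const (Real.log (1 - p))))
  have heq : (1 * (1 - q) - q * (-1)) / (1 - q)^2 * (Real.log q - Real.log p)
      + q / (1 - q) * (1/q) + (1/(1-q) * (-1))
      = (Real.log q - Real.log p) / (1 - q)^2 := by
    field_simp
    ring
  have h6 : HasDerivAt (fun x : ℝ => x / (1 - x) * (Real.log x - Real.log p)
      + (Real.log (1 - x) - Real.log (1 - p)))
      ((Real.log q - Real.log p) / (1 - q)^2) q := by
    rw [← heq]; exact h5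
  apply h6.congr_of_eventuallyEq
  filter_upwards [isOpen_Ioo.mem_nhds (Set.mem_Ioo.mpr ⟨hq0, hqp⟩)] with x hx
  exact klBin_aux p hp0 hp1 hx

/-- For `p ∈ (0,1)`, the map `q ↦ D(q‖p)/(1−q)` is strictly decreasing
on `(0,p)`; equivalently, `λ ↦ (1+λ)·D(λ/(1+λ) ‖ p)` is strictly decreasing on
`(0, p/(1−p))`. -/
theorem stmt6 (p : ℝ) (hp0 : 0 < p) (hp1 : p < 1) :
    StrictAntiOn (fun q : ℝ => klBin q p / (1 - q)) (Set.Ioo 0 p) ∧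
    StrictAntiOn (fun l : ℝ => (1 + l) * klBin (l / (1 + l)) p)
      (Set.Ioo 0 (p / (1 - p))) := by
  have hP : 0 < 1 - p := by linarith
  have part1 : StrictAntiOn (fun q : ℝ => klBin q p / (1 - q)) (Set.Ioo 0 p) := by
    apply strictAntiOn_of_deriv_neg (convex_Ioo 0 p)
    · intro x hx
      exact (stmt6_deriv p hp0 hp1 hx).continuousAt.continuousWithinAt
    · intro x hx
      rw [interior_Ioo] at hx
      rw [(stmt6_deriv p hp0 hp1 hx).deriv]
      apply div_neg_of_neg_of_pos
      · have := Real.log_lt_log hx.1 hx.2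
        linarith
      · have h1x : 0 < 1 - x := by linarith [hx.2]
        positivity
  refine ⟨part1, ?_⟩
  intro l1 hl1 l2 hl2 h12
  obtain ⟨h10, h1P⟩ := hl1
  obtain ⟨h20, h2P⟩ := hl2
  have hp1l1 : 0 < 1 + l1 := by linarith
  have hp1l2 : 0 < 1 + l2 := by linarith
  have hmem : ∀ l : ℝ, l ∈ Set.Ioo 0 (p / (1 - p)) → l / (1 + l) ∈ Set.Ioo (0:ℝ) p := by
    intro l ⟨hl0, hlP⟩
    have h1l : 0 < 1 + l := by linarith
    constructor
    · exact div_pos hl0 h1l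
    · rw [div_lt_iff₀ h1l]
      rw [lt_div_iff₀ hP] at hlP
      nlinarith
  have hrw : ∀ l : ℝ, 0 < 1 + l →
      (1 + l) * klBin (l / (1 + l)) p = klBin (l / (1 + l)) p / (1 - l / (1 + l)) := by
    intro l hl
    have : 1 - l / (1 + l) = 1 / (1 + l) := by field_simp; ring
    rw [this, div_div_eq_mul_div, div_one, mul_comm]
  have hmono : l1 / (1 + l1) < l2 / (1 + l2) := by
    rw [div_lt_div_iff₀ hp1l1 hp1l2]; nlinarith
  simp only
  rw [hrw l1 hp1l1, hrw l2 hp1l2]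
  exact part1 (hmem l1 ⟨h10, h1P⟩) (hmem l2 ⟨h20, h2P⟩) hmono
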